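/- Let x, y, z ∈ ℂ with y + xz ≠ 0, and let α, β : ℕ → ℂ with α 0 = β 0. Define sequences α̃ and β̃ by α̃_0 = α_0, α̃_i = α_i − Σ_{k=0}^{i-1} C(i,k) z^{i-k} α̃_k for i ≥ 1, and β̃_0 = β_0, β̃_i = (β_i − Σ_{k=0}^{i-1} C(i,k) x^{i-k} (y+xz)^k β̃_k) / (y+xz)^i for i ≥ 1. Then the n×n weighted recurrence matrix P with parameters (x,y,z), first column α, first row β factors as P = L · T · Rᵗ, where L_{i,j} = C(i,j) z^{i-j}, T is the Toeplitz matrix with T_{i,j} = α̃_{i-j} for i ≥ j and T_{i,j} = β̃_{j-i} for i < j, and R_{i,j} = C(i,j) (y+xz)^j x^{i-j}. -/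

import Mathlib

open Matrix Finset

private noncomputable def Lt (z : ℂ) (i k : ℕ) : ℂ := (Nat.choose i k : ℂ) * z ^ (i - k)
private noncomputable def Rt (x y z : ℂ) (j l : ℕ) : ℂ :=
  (Nat.choose j l : ℂ) * (y + x * z) ^ l * x ^ (j - l)
private noncomputable def Tt (ta tb : ℕ → ℂ) (k l : ℕ) : ℂ :=
  if l ≤ k then ta (k - l) else tb (l - k)
private noncomputable def Qf (x y z : ℂ) (ta tb : ℕ → ℂ) (i j : ℕ) : ℂ :=
  ∑ k ∈ Finset.range (i + 1), ∑ l ∈ Finset.range (j + 1),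
    Lt z i k * Tt ta tb k l * Rt x y z j l

private lemma Lt_succ_succ (z : ℂ) (i k : ℕ) :
    Lt z (i + 1) (k + 1) = Lt z i k + z * Lt z i (k + 1) := by
  unfold Lt
  rcases le_or_gt (k + 1) i with h | h
  · have h1 : i + 1 - (k + 1) = i - k := by omega
    have h2 : i - k = (i - (k + 1)) + 1 := by omega
    rw [h1, Nat.choose_succ_succ, h2]
    push_cast
    ring
  · have h0 : Nat.choose i (k + 1) = 0 := Nat.choose_eq_zero_of_lt h
    have h1 : i + 1 - (k + 1) = i - k := by omega
    rw [h1, Nat.choose_succ_succ, h0]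
    push_cast
    ring

private lemma Lt_succ_zero (z : ℂ) (i : ℕ) : Lt z (i + 1) 0 = z * Lt z i 0 := by
  simp [Lt, pow_succ]; ring

private lemma Lt_zero (z : ℂ) (i k : ℕ) (h : i < k) : Lt z i k = 0 := by
  simp [Lt, Nat.choose_eq_zero_of_lt h]

private lemma Rt_succ_succ (x y z : ℂ) (j l : ℕ) :
    Rt x y z (j + 1) (l + 1) = (y + x * z) * Rt x y z j l + x * Rt x y z j (l + 1) := by
  unfold Rt
  rcases le_or_gt (l + 1) j with h | h
  · have h1 : j + 1 - (l + 1) = j - l := by omega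
    have h2 : j - l = (j - (l + 1)) + 1 := by omega
    rw [h1, Nat.choose_succ_succ, h2]
    push_cast
    ring
  · have h0 : Nat.choose j (l + 1) = 0 := Nat.choose_eq_zero_of_lt h
    have h1 : j + 1 - (l + 1) = j - l := by omega
    rw [h1, Nat.choose_succ_succ, h0]
    push_cast
    ring

private lemma Rt_succ_zero (x y z : ℂ) (j : ℕ) : Rt x y z (j + 1) 0 = x * Rt x y z j 0 := by
  simp [Rt, pow_succ]; ring

private lemma Rt_zero (x y z : ℂ) (j l : ℕ) (h : j < l) : Rt x y z j l = 0 := by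
  simp [Rt, Nat.choose_eq_zero_of_lt h]

private lemma Tt_succ_succ (ta tb : ℕ → ℂ) (k l : ℕ) :
    Tt ta tb (k + 1) (l + 1) = Tt ta tb k l := by
  unfold Tt
  have h : l + 1 ≤ k + 1 ↔ l ≤ k := by omega
  simp [h, Nat.succ_sub_succ]

/-- inner expansion on the `l` index -/
private lemma inner_expand (x y z : ℂ) (ta tb : ℕ → ℂ) (k j : ℕ) :
    ∑ l ∈ Finset.range (j + 1 + 1), Tt ta tb k l * Rt x y z (j + 1) l
      = (y + x * z) * ∑ l ∈ Finset.range (j + 1), Tt ta tb k (l + 1) * Rt x y z j l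
        + x * ∑ l ∈ Finset.range (j + 1), Tt ta tb k l * Rt x y z j l := by
  rw [Finset.sum_range_succ' (fun l => Tt ta tb k l * Rt x y z (j + 1) l) (j + 1)]
  simp only [Rt_succ_succ, Rt_succ_zero]
  have key : ∑ l ∈ Finset.range (j + 1),
      Tt ta tb k (l + 1) * ((y + x * z) * Rt x y z j l + x * Rt x y z j (l + 1))
      = (y + x * z) * ∑ l ∈ Finset.range (j + 1), Tt ta tb k (l + 1) * Rt x y z j l
        + (∑ l ∈ Finset.range (j + 1), x * (Tt ta tb k (l + 1) * Rt x y z j (l + 1))) := by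
    rw [Finset.mul_sum, ← Finset.sum_add_distrib]
    exact Finset.sum_congr rfl (fun l _ => by ring)
  rw [key]
  have hx : (∑ l ∈ Finset.range (j + 1), x * (Tt ta tb k (l + 1) * Rt x y z j (l + 1)))
      + Tt ta tb k 0 * (x * Rt x y z j 0)
      = x * ∑ l ∈ Finset.range (j + 1), Tt ta tb k l * Rt x y z j l := by
    have e1 : (∑ l ∈ Finset.range (j + 1), x * (Tt ta tb k (l + 1) * Rt x y z j (l + 1)))
        + Tt ta tb k 0 * (x * Rt x y z j 0)
        = x * ∑ l ∈ Finset.range (j + 1 + 1), Tt ta tb k l * Rt x y z j l := by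
      rw [Finset.sum_range_succ' (fun l => Tt ta tb k l * Rt x y z j l) (j + 1),
        mul_add, Finset.mul_sum]
      ring
    rw [e1, Finset.sum_range_succ, Rt_zero x y z j (j + 1) (Nat.lt_succ_self j)]
    ring
  rw [add_assoc, hx]

/-- expansion on the `k` index -/
private lemma k_expand (z : ℂ) (ta tb : ℕ → ℂ) (i l : ℕ) :
    ∑ k ∈ Finset.range (i + 1 + 1), Lt z (i + 1) k * Tt ta tb k (l + 1)
      = ∑ k ∈ Finset.range (i + 1), Lt z i k * Tt ta tb k l
        + z * ∑ k ∈ Finset.range (i + 1), Lt z i k * Tt ta tb k (l + 1) := by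
  rw [Finset.sum_range_succ' (fun k => Lt z (i + 1) k * Tt ta tb k (l + 1)) (i + 1)]
  simp only [Lt_succ_succ, Lt_succ_zero]
  have key : ∑ k ∈ Finset.range (i + 1),
      (Lt z i k + z * Lt z i (k + 1)) * Tt ta tb (k + 1) (l + 1)
      = ∑ k ∈ Finset.range (i + 1), Lt z i k * Tt ta tb k l
        + ∑ k ∈ Finset.range (i + 1), z * (Lt z i (k + 1) * Tt ta tb (k + 1) (l + 1)) := by
    rw [← Finset.sum_add_distrib]
    refine Finset.sum_congr rfl (fun k _ => ?_)
    simp only [add_mul, Tt_succ_succ]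
    try ring
  rw [key]
  have hz : (∑ k ∈ Finset.range (i + 1), z * (Lt z i (k + 1) * Tt ta tb (k + 1) (l + 1)))
      + z * Lt z i 0 * Tt ta tb 0 (l + 1)
      = z * ∑ k ∈ Finset.range (i + 1), Lt z i k * Tt ta tb k (l + 1) := by
    have e1 : (∑ k ∈ Finset.range (i + 1), z * (Lt z i (k + 1) * Tt ta tb (k + 1) (l + 1)))
        + z * Lt z i 0 * Tt ta tb 0 (l + 1)
        = z * ∑ k ∈ Finset.range (i + 1 + 1), Lt z i k * Tt ta tb k (l + 1) := by
      rw [Finset.sum_range_succ' (fun k => Lt z i k * Tt ta tb k (l + 1)) (i + 1),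
        mul_add, Finset.mul_sum]
      ring
    rw [e1, Finset.sum_range_succ, Lt_zero z i (i + 1) (Nat.lt_succ_self i)]
    ring
  rw [add_assoc, hz]

/-- swap the order of summation, factoring `Rt` out of the inner sum -/
private lemma Q_swap (x y z : ℂ) (ta tb : ℕ → ℂ) (i j : ℕ) :
    Qf x y z ta tb i j
      = ∑ l ∈ Finset.range (j + 1),
          (∑ k ∈ Finset.range (i + 1), Lt z i k * Tt ta tb k l) * Rt x y z j l := by
  unfold Qf
  rw [Finset.sum_comm]
  exact Finset.sum_congr rfl fun l _ => by rw [Finset.sum_mul]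

/-- column expansion -/
private lemma Q_col (x y z : ℂ) (ta tb : ℕ → ℂ) (a j : ℕ) :
    Qf x y z ta tb a (j + 1)
      = (y + x * z) * ∑ l ∈ Finset.range (j + 1),
          (∑ k ∈ Finset.range (a + 1), Lt z a k * Tt ta tb k (l + 1)) * Rt x y z j l
        + x * Qf x y z ta tb a j := by
  have e1 : Qf x y z ta tb a (j + 1)
      = ∑ k ∈ Finset.range (a + 1),
          Lt z a k * ∑ l ∈ Finset.range (j + 1 + 1), Tt ta tb k l * Rt x y z (j + 1) l := by
    unfold Qf
    exact Finset.sum_congr rfl fun k _ => by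
      rw [Finset.mul_sum]
      exact Finset.sum_congr rfl fun l _ => by ring
  rw [e1]
  have e2 : ∑ k ∈ Finset.range (a + 1),
      Lt z a k * ∑ l ∈ Finset.range (j + 1 + 1), Tt ta tb k l * Rt x y z (j + 1) l
      = (y + x * z) * ∑ k ∈ Finset.range (a + 1),
          ∑ l ∈ Finset.range (j + 1), Lt z a k * Tt ta tb k (l + 1) * Rt x y z j l
        + x * ∑ k ∈ Finset.range (a + 1),
          ∑ l ∈ Finset.range (j + 1), Lt z a k * Tt ta tb k l * Rt x y z j l := by
    rw [Finset.mul_sum, Finset.mul_sum, ← Finset.sum_add_distrib]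
    refine Finset.sum_congr rfl fun k _ => ?_
    rw [inner_expand x y z ta tb k j, Finset.mul_sum, Finset.mul_sum, Finset.mul_sum,
      Finset.mul_sum, ← Finset.sum_add_distrib, Finset.mul_sum, ← Finset.sum_add_distrib]
    refine Finset.sum_congr rfl fun l _ => by ring
  rw [e2]
  have e3 : ∑ k ∈ Finset.range (a + 1),
      ∑ l ∈ Finset.range (j + 1), Lt z a k * Tt ta tb k (l + 1) * Rt x y z j l
      = ∑ l ∈ Finset.range (j + 1),
          (∑ k ∈ Finset.range (a + 1), Lt z a k * Tt ta tb k (l + 1)) * Rt x y z j l := by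
    rw [Finset.sum_comm]
    exact Finset.sum_congr rfl fun l _ => (Finset.sum_mul _ _ _).symm
  have e4 : ∑ k ∈ Finset.range (a + 1),
      ∑ l ∈ Finset.range (j + 1), Lt z a k * Tt ta tb k l * Rt x y z j l
      = Qf x y z ta tb a j := rfl
  rw [e3, e4]

/-- the recurrence for Qf -/
private lemma Q_rec (x y z : ℂ) (ta tb : ℕ → ℂ) (i j : ℕ) :
    Qf x y z ta tb (i + 1) (j + 1)
      = x * Qf x y z ta tb (i + 1) j + y * Qf x y z ta tb i j
        + z * Qf x y z ta tb i (j + 1) := by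
  have h1 := Q_col x y z ta tb (i + 1) j
  have h3 := Q_col x y z ta tb i j
  have h2 : ∑ l ∈ Finset.range (j + 1),
      (∑ k ∈ Finset.range (i + 1 + 1), Lt z (i + 1) k * Tt ta tb k (l + 1)) * Rt x y z j l
      = Qf x y z ta tb i j
        + z * ∑ l ∈ Finset.range (j + 1),
            (∑ k ∈ Finset.range (i + 1), Lt z i k * Tt ta tb k (l + 1)) * Rt x y z j l := by
    have : ∀ l ∈ Finset.range (j + 1),
        (∑ k ∈ Finset.range (i + 1 + 1), Lt z (i + 1) k * Tt ta tb k (l + 1)) * Rt x y z j l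
        = (∑ k ∈ Finset.range (i + 1), Lt z i k * Tt ta tb k l) * Rt x y z j l
          + z * ((∑ k ∈ Finset.range (i + 1), Lt z i k * Tt ta tb k (l + 1)) * Rt x y z j l) := by
      intro l _
      rw [k_expand]
      ring
    rw [Finset.sum_congr rfl this, Finset.sum_add_distrib, ← Finset.mul_sum, ← Q_swap]
  linear_combination h1 + (y + x * z) * h2 - z * h3

/-- first column of Qf -/
private lemma Q_col0 (x y z : ℂ) (α : ℕ → ℂ) (ta tb : ℕ → ℂ)
    (hta0 : ta 0 = α 0)
    (hta : ∀ i, 1 ≤ i →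
      ta i = α i - ∑ k ∈ Finset.range i, (Nat.choose i k : ℂ) * z ^ (i - k) * ta k)
    (i : ℕ) : Qf x y z ta tb i 0 = α i := by
  have e0 : Qf x y z ta tb i 0 = ∑ k ∈ Finset.range (i + 1), Lt z i k * ta k := by
    unfold Qf
    refine Finset.sum_congr rfl fun k _ => ?_
    rw [Finset.sum_range_one]
    simp [Tt, Rt]
  rw [e0]
  cases i with
  | zero => simp [Lt, hta0]
  | succ m =>
    rw [Finset.sum_range_succ, hta (m + 1) (by omega)]
    have hL : Lt z (m + 1) (m + 1) = 1 := by simp [Lt]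
    rw [hL]
    have : ∑ k ∈ Finset.range (m + 1), Lt z (m + 1) k * ta k
        = ∑ k ∈ Finset.range (m + 1), (Nat.choose (m + 1) k : ℂ) * z ^ (m + 1 - k) * ta k := by
      exact Finset.sum_congr rfl fun k _ => by rw [Lt]
    rw [this]
    ring

/-- first row of Qf -/
private lemma Q_row0 (x y z : ℂ) (hxyz : y + x * z ≠ 0) (α β : ℕ → ℂ) (ta tb : ℕ → ℂ)
    (hαβ : α 0 = β 0) (hta0 : ta 0 = α 0) (htb0 : tb 0 = β 0)
    (htb : ∀ i, 1 ≤ i →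
      tb i = (β i - ∑ k ∈ Finset.range i,
        (Nat.choose i k : ℂ) * x ^ (i - k) * (y + x * z) ^ k * tb k) / (y + x * z) ^ i)
    (j : ℕ) : Qf x y z ta tb 0 j = β j := by
  have hT : ∀ l, Tt ta tb 0 l = tb l := by
    intro l
    cases l with
    | zero => simp [Tt, hta0, htb0, hαβ]
    | succ m => simp [Tt]
  have e0 : Qf x y z ta tb 0 j = ∑ l ∈ Finset.range (j + 1), tb l * Rt x y z j l := by
    unfold Qf
    rw [Finset.sum_range_one]
    refine Finset.sum_congr rfl fun l _ => ?_
    rw [hT]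
    simp [Lt]
  rw [e0]
  cases j with
  | zero => simp [Rt, htb0]
  | succ m =>
    have hpow : (y + x * z) ^ (m + 1) ≠ 0 := pow_ne_zero _ hxyz
    rw [Finset.sum_range_succ, htb (m + 1) (by omega)]
    have hR : Rt x y z (m + 1) (m + 1) = (y + x * z) ^ (m + 1) := by simp [Rt]
    rw [hR]
    have : ∑ l ∈ Finset.range (m + 1), tb l * Rt x y z (m + 1) l
        = ∑ l ∈ Finset.range (m + 1),
            (Nat.choose (m + 1) l : ℂ) * x ^ (m + 1 - l) * (y + x * z) ^ l * tb l := by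
      exact Finset.sum_congr rfl fun l _ => by rw [Rt]; ring
    rw [this]
    field_simp
    ring

theorem stmt_5 (n : ℕ) (x y z : ℂ) (hxyz : y + x * z ≠ 0)
    (α β : ℕ → ℂ) (hαβ : α 0 = β 0)
    (P : ℕ → ℕ → ℂ)
    (hcol : ∀ i, P i 0 = α i) (hrow : ∀ j, P 0 j = β j)
    (hrec : ∀ i j, 1 ≤ i → 1 ≤ j →
      P i j = x * P i (j - 1) + y * P (i - 1) (j - 1) + z * P (i - 1) j)
    (ta tb : ℕ → ℂ)
    (hta0 : ta 0 = α 0)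
    (hta : ∀ i, 1 ≤ i →
      ta i = α i - ∑ k ∈ Finset.range i, (Nat.choose i k : ℂ) * z ^ (i - k) * ta k)
    (htb0 : tb 0 = β 0)
    (htb : ∀ i, 1 ≤ i →
      tb i = (β i - ∑ k ∈ Finset.range i,
        (Nat.choose i k : ℂ) * x ^ (i - k) * (y + x * z) ^ k * tb k) / (y + x * z) ^ i) :
    (Matrix.of fun i j : Fin n => P i j) =
      (Matrix.of fun i j : Fin n => (Nat.choose i j : ℂ) * z ^ ((i : ℕ) - (j : ℕ))) *
        (Matrix.of fun i j : Fin n =>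
          if (j : ℕ) ≤ (i : ℕ) then ta ((i : ℕ) - (j : ℕ)) else tb ((j : ℕ) - (i : ℕ))) *
        (Matrix.of fun i j : Fin n =>
          (Nat.choose i j : ℂ) * (y + x * z) ^ (j : ℕ) * x ^ ((i : ℕ) - (j : ℕ)))ᵀ := by
  have hPQ : ∀ i j, P i j = Qf x y z ta tb i j := by
    intro i
    induction i with
    | zero => intro j; rw [hrow, Q_row0 x y z hxyz α β ta tb hαβ hta0 htb0 htb]
    | succ m ih =>
      intro j
      induction j with
      | zero => rw [hcol, Q_col0 x y z α ta tb hta0 hta]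
      | succ p ihj =>
        have := hrec (m + 1) (p + 1) (by omega) (by omega)
        simp only [Nat.add_sub_cancel] at this
        rw [this, ihj, ih p, ih (p + 1), Q_rec]
  ext i j
  rw [Matrix.mul_apply]
  simp only [Matrix.of_apply, Matrix.transpose_apply]
  rw [hPQ i j, Q_swap]
  have hi : (i : ℕ) < n := i.isLt
  have hj : (j : ℕ) < n := j.isLt
  have htrunc : ∀ (f : ℕ → ℂ) (m : ℕ), m < n → (∀ k, m < k → f k = 0) →
      ∑ k : Fin n, f (k : ℕ) = ∑ k ∈ Finset.range (m + 1), f k := by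
    intro f m hm hf
    rw [Fin.sum_univ_eq_sum_range]
    refine (Finset.sum_subset ?_ ?_).symm
    · intro a ha
      simp only [Finset.mem_range] at *
      omega
    · intro k hk hk2
      simp only [Finset.mem_range] at hk hk2
      exact hf k (by omega)
  have step1 : ∀ lv : ℕ,
      (∑ k : Fin n, Lt z (i : ℕ) (k : ℕ) * Tt ta tb (k : ℕ) lv)
      = ∑ k ∈ Finset.range ((i : ℕ) + 1), Lt z (i : ℕ) k * Tt ta tb k lv := fun lv =>
    htrunc (fun k => Lt z (i : ℕ) k * Tt ta tb k lv) (i : ℕ) hi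
      (fun k hk => by
        show Lt z (i : ℕ) k * Tt ta tb k lv = 0
        rw [Lt_zero z (i : ℕ) k hk, zero_mul])
  have step2 : (∑ l : Fin n,
        (∑ k : Fin n, Lt z (i : ℕ) (k : ℕ) * Tt ta tb (k : ℕ) (l : ℕ)) *
          Rt x y z (j : ℕ) (l : ℕ))
      = ∑ l ∈ Finset.range ((j : ℕ) + 1),
          (∑ k : Fin n, Lt z (i : ℕ) (k : ℕ) * Tt ta tb (k : ℕ) l) * Rt x y z (j : ℕ) l :=
    htrunc (fun l => (∑ k : Fin n, Lt z (i : ℕ) (k : ℕ) * Tt ta tb (k : ℕ) l) *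
        Rt x y z (j : ℕ) l) (j : ℕ) hj
      (fun l hl => by
        show (∑ k : Fin n, Lt z (i : ℕ) (k : ℕ) * Tt ta tb (k : ℕ) l) * Rt x y z (j : ℕ) l = 0
        rw [Rt_zero x y z (j : ℕ) l hl, mul_zero])
  calc ∑ l ∈ Finset.range ((j : ℕ) + 1),
        (∑ k ∈ Finset.range ((i : ℕ) + 1), Lt z (i : ℕ) k * Tt ta tb k l) *
          Rt x y z (j : ℕ) l
      = ∑ l ∈ Finset.range ((j : ℕ) + 1),
          (∑ k : Fin n, Lt z (i : ℕ) (k : ℕ) * Tt ta tb (k : ℕ) l) * Rt x y z (j : ℕ) l := by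
        exact Finset.sum_congr rfl fun l _ => by rw [step1]
    _ = ∑ l : Fin n,
          (∑ k : Fin n, Lt z (i : ℕ) (k : ℕ) * Tt ta tb (k : ℕ) (l : ℕ)) *
            Rt x y z (j : ℕ) (l : ℕ) := step2.symm
    _ = ∑ l : Fin n,
          (∑ k : Fin n, (Nat.choose (i : ℕ) (k : ℕ) : ℂ) * z ^ ((i : ℕ) - (k : ℕ)) *
            (if (l : ℕ) ≤ (k : ℕ) then ta ((k : ℕ) - (l : ℕ)) else tb ((l : ℕ) - (k : ℕ)))) *
          ((Nat.choose (j : ℕ) (l : ℕ) : ℂ) * (y + x * z) ^ (l : ℕ) *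
            x ^ ((j : ℕ) - (l : ℕ))) := by
        simp only [Lt, Tt, Rt]
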